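/- Let x₁,…,x_N be unit vectors in ℝ^d and let h: ℝ → ℝ be convex and decreasing. Then (1/N²)·Σ_{i,j} h(‖xᵢ - xⱼ‖²) ≥ h(2), with the sum over all ordered pairs (i,j) including i = j. -/

import Mathlib

/-- For unit vectors x₁,…,x_N in ℝ^d and h : ℝ → ℝ convex and decreasing,
(1/N²)·Σ_{i,j} h(‖xᵢ - xⱼ‖²) ≥ h(2) (sum over all ordered pairs). -/
theorem stmt_11 {N d : ℕ} (hN : 0 < N) (x : Fin N → EuclideanSpace ℝ (Fin d))
    (hx : ∀ i, ‖x i‖ = 1) (h : ℝ → ℝ)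
    (hconv : ConvexOn ℝ Set.univ h) (hdec : Antitone h) :
    h 2 ≤ (1 / (N : ℝ) ^ 2) * ∑ i, ∑ j, h (‖x i - x j‖ ^ 2) := by
  have hNpos : (0 : ℝ) < (N : ℝ) ^ 2 := by positivity
  set w : Fin N × Fin N → ℝ := fun _ => 1 / (N : ℝ) ^ 2 with hw
  have hsum1 : ∑ p : Fin N × Fin N, w p = 1 := by
    simp [w, Finset.card_univ]
    field_simp
  have jensen := hconv.map_sum_le (t := Finset.univ)
    (w := w) (p := fun p : Fin N × Fin N => ‖x p.1 - x p.2‖ ^ 2)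
    (fun i _ => by positivity) hsum1 (fun i _ => Set.mem_univ _)
  have hdist : ∀ i j, ‖x i - x j‖ ^ 2 = 2 - 2 * inner ℝ (x i) (x j) := by
    intro i j
    have := @norm_sub_sq_real (EuclideanSpace ℝ (Fin d)) _ _ (x i) (x j)
    rw [this, hx i, hx j]; ring
  have havg : ∑ p : Fin N × Fin N, w p • (‖x p.1 - x p.2‖ ^ 2 : ℝ) ≤ 2 := by
    have hinner : ∑ i, ∑ j, (inner ℝ (x i) (x j) : ℝ) = ‖∑ i, x i‖ ^ 2 := by
      rw [← real_inner_self_eq_norm_sq, sum_inner]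
      exact Finset.sum_congr rfl fun i _ => by rw [inner_sum]
    have hkey : ∑ p : Fin N × Fin N, (‖x p.1 - x p.2‖ ^ 2 : ℝ)
        = 2 * N ^ 2 - 2 * ‖∑ i, x i‖ ^ 2 := by
      rw [Fintype.sum_prod_type]
      simp only [hdist]
      rw [← hinner]
      simp [Finset.sum_sub_distrib, Finset.mul_sum]
      ring
    have h2 : ∑ p : Fin N × Fin N, w p • (‖x p.1 - x p.2‖ ^ 2 : ℝ)
        = (1 / (N:ℝ)^2) * (2 * N ^ 2 - 2 * ‖∑ i, x i‖ ^ 2) := by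
      rw [← hkey, Finset.mul_sum]; simp [w, smul_eq_mul]
    rw [h2]
    have : (0:ℝ) ≤ ‖∑ i, x i‖ ^ 2 := by positivity
    rw [div_mul_eq_mul_div, one_mul, div_le_iff₀ hNpos]
    nlinarith
  have := hdec havg
  refine le_trans this (le_trans jensen ?_)
  rw [Finset.mul_sum, Fintype.sum_prod_type]
  simp [w, smul_eq_mul, Finset.mul_sum]
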